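/- (Gentle Measurement Lemma for ensembles) Let {p(x), ρ_x} be a finite ensemble of density operators with average ρ = Σ_x p(x) ρ_x, and let 0 ≤ Λ ≤ I satisfy Tr{Λρ} ≥ 1 − ε. Then Σ_x p(x) ‖√Λ ρ_x √Λ − ρ_x‖₁ ≤ 2√ε. -/

import Mathlib

open Matrix
open scoped ComplexOrder

/-- The positive semidefinite square root, as defined in the older Mathlib. -/
noncomputable def Matrix.PosSemidef.sqrt {n 𝕜 : Type*} [Fintype n] [RCLike 𝕜] [DecidableEq n]
    {A : Matrix n n 𝕜} (hA : A.PosSemidef) : Matrix n n 𝕜 :=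
  hA.1.eigenvectorUnitary.1 * diagonal ((↑) ∘ (√·) ∘ hA.1.eigenvalues) *
    (star hA.1.eigenvectorUnitary : Matrix n n 𝕜)

namespace Matrix.PosSemidef

variable {n 𝕜 : Type*} [Fintype n] [RCLike 𝕜] [DecidableEq n] {A : Matrix n n 𝕜}

lemma posSemidef_sqrt (hA : A.PosSemidef) : PosSemidef hA.sqrt := by
  have hd : (diagonal ((↑) ∘ (√·) ∘ hA.1.eigenvalues : n → 𝕜)).PosSemidef := by
    refine posSemidef_diagonal_iff.mpr fun i => ?_
    simp only [Function.comp_apply]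
    exact RCLike.ofReal_nonneg.mpr (Real.sqrt_nonneg _)
  have h := hd.mul_mul_conjTranspose_same (hA.1.eigenvectorUnitary : Matrix n n 𝕜)
  rw [← Matrix.star_eq_conjTranspose] at h
  exact h

lemma sqrt_mul_self (hA : A.PosSemidef) : hA.sqrt * hA.sqrt = A := by
  have hC : star (hA.1.eigenvectorUnitary : Matrix n n 𝕜) * hA.1.eigenvectorUnitary = 1 :=
    Unitary.coe_star_mul_self _
  have E2 : diagonal ((↑) ∘ (√·) ∘ hA.1.eigenvalues : n → 𝕜) *
      diagonal ((↑) ∘ (√·) ∘ hA.1.eigenvalues) = diagonal ((↑) ∘ hA.1.eigenvalues) := by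
    rw [diagonal_mul_diagonal]
    congr 1
    funext v
    simp only [Function.comp_apply]
    rw [← RCLike.ofReal_mul, Real.mul_self_sqrt (hA.eigenvalues_nonneg v)]
  have hs := hA.1.spectral_theorem
  simp only [Unitary.conjStarAlgAut_apply] at hs
  rw [Matrix.PosSemidef.sqrt]
  conv_rhs => rw [hs, ← E2]
  generalize (hA.1.eigenvectorUnitary : Matrix n n 𝕜) = C at hC ⊢
  generalize diagonal ((↑) ∘ (√·) ∘ hA.1.eigenvalues : n → 𝕜) = D
  have h : C * D * star C * (C * D * star C) = C * (D * (star C * C) * D) * star C := by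
    noncomm_ring
  rw [h, hC, mul_one, Matrix.mul_assoc, Matrix.mul_assoc]

lemma eq_of_sq_eq_sq (hA : A.PosSemidef) {B : Matrix n n 𝕜} (hB : PosSemidef B)
    (hAB : A ^ 2 = B ^ 2) : A = B := by
  by_contra h_ne
  let ⟨v, t, ht, hv, hv'⟩ := (hA.1.sub hB.1).exists_eigenvector_of_ne_zero (sub_ne_zero.mpr h_ne)
  have h_sum : 0 = t * (star v ⬝ᵥ A *ᵥ v + star v ⬝ᵥ B *ᵥ v) := calc
    0 = star v ⬝ᵥ (A ^ 2 - B ^ 2) *ᵥ v := by rw [hAB, sub_self, zero_mulVec, dotProduct_zero]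
    _ = star v ⬝ᵥ A *ᵥ (A - B) *ᵥ v + star v ⬝ᵥ (A - B) *ᵥ B *ᵥ v := by
      rw [mulVec_mulVec, mulVec_mulVec, ← dotProduct_add, ← add_mulVec, Matrix.mul_sub,
        Matrix.sub_mul, add_sub, sub_add_cancel, pow_two, pow_two]
    _ = t * (star v ⬝ᵥ A *ᵥ v) + (star v) ᵥ* (A - B)ᴴ ⬝ᵥ B *ᵥ v := by
      rw [hv', mulVec_smul, dotProduct_smul, RCLike.real_smul_eq_coe_mul,
        dotProduct_mulVec _ (A - B), hA.1.sub hB.1]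
    _ = t * (star v ⬝ᵥ A *ᵥ v + star v ⬝ᵥ B *ᵥ v) := by
      simp_rw [← star_mulVec, hv', mul_add, ← RCLike.real_smul_eq_coe_mul, ← smul_dotProduct]
      congr 2 with i
      simp only [Pi.star_apply, Pi.smul_apply, RCLike.real_smul_eq_coe_mul, star_mul',
        RCLike.star_def, RCLike.conj_ofReal]
  replace h_sum : star v ⬝ᵥ A *ᵥ v + star v ⬝ᵥ B *ᵥ v = 0 := by
    rw [eq_comm, ← mul_zero (t : 𝕜)] at h_sum
    exact mul_left_cancel₀ (RCLike.ofReal_ne_zero.mpr ht) h_sum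
  have h_van : star v ⬝ᵥ A *ᵥ v = 0 ∧ star v ⬝ᵥ B *ᵥ v = 0 := by
    refine ⟨le_antisymm ?_ (hA.dotProduct_mulVec_nonneg v),
      le_antisymm ?_ (hB.dotProduct_mulVec_nonneg v)⟩
    · rw [add_comm, add_eq_zero_iff_eq_neg] at h_sum
      simpa only [h_sum, neg_nonneg] using hB.dotProduct_mulVec_nonneg v
    · simpa only [add_eq_zero_iff_eq_neg.mp h_sum, neg_nonneg] using hA.dotProduct_mulVec_nonneg v
  have aux : star v ⬝ᵥ (A - B) *ᵥ v = 0 := by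
    rw [sub_mulVec, dotProduct_sub, h_van.1, h_van.2, sub_zero]
  rw [hv', dotProduct_smul, RCLike.real_smul_eq_coe_mul, mul_eq_zero, RCLike.ofReal_eq_zero] at aux
  exact hv (dotProduct_star_self_eq_zero.mp <| aux.resolve_left ht)

lemma eq_sqrt_of_sq_eq (hA : A.PosSemidef) {B : Matrix n n 𝕜} (hB : PosSemidef B)
    (hAB : A ^ 2 = B) : A = hB.sqrt :=
  hA.eq_of_sq_eq_sq hB.posSemidef_sqrt (by rw [hAB, pow_two, hB.sqrt_mul_self])

end Matrix.PosSemidef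

/-- The trace norm `‖A‖₁ = Tr √(AᴴA)` of a complex matrix. -/
noncomputable def traceNorm {d : ℕ} (A : Matrix (Fin d) (Fin d) ℂ) : ℝ :=
  ((Matrix.posSemidef_conjTranspose_mul_self A).sqrt.trace).re

/-- The Loewner order: `A ≤ B` iff `B - A` is positive semidefinite. -/
def Loewner {d : ℕ} (A B : Matrix (Fin d) (Fin d) ℂ) : Prop :=
  (B - A).PosSemidef

namespace GentleAux

variable {d : ℕ}

lemma trace_re_nonneg {A : Matrix (Fin d) (Fin d) ℂ} (hA : A.PosSemidef) :
    0 ≤ A.trace.re := by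
  have h : A.trace = ∑ i, A i i := rfl
  rw [h, Complex.re_sum]
  refine Finset.sum_nonneg fun i _ => ?_
  have h2 := hA.re_dotProduct_nonneg (Pi.single i 1)
  simpa [dotProduct, Matrix.mulVec_single, Pi.single_apply, apply_ite,
    Finset.sum_ite_eq'] using h2

lemma trace_conj_mul (A B : Matrix (Fin d) (Fin d) ℂ) :
    (Aᴴ * B).trace = ∑ p : Fin d × Fin d, (starRingEnd ℂ) (A p.1 p.2) * B p.1 p.2 := by
  rw [Fintype.sum_prod_type, Matrix.trace]
  simp only [Matrix.diag_apply, Matrix.mul_apply, Matrix.conjTranspose_apply, Matrix.star_apply,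
    RCLike.star_def]
  exact Finset.sum_comm

lemma trace_conj_mul_self_re (A : Matrix (Fin d) (Fin d) ℂ) :
    ((Aᴴ * A).trace).re = ∑ p : Fin d × Fin d, ‖A p.1 p.2‖ ^ 2 := by
  rw [trace_conj_mul, Complex.re_sum]
  refine Finset.sum_congr rfl fun p _ => ?_
  rw [Complex.sq_norm, ← Complex.normSq_eq_conj_mul_self, Complex.ofReal_re]

/-- Cauchy–Schwarz for the Frobenius inner product. -/
lemma trace_CS (A B : Matrix (Fin d) (Fin d) ℂ) :
    ((Aᴴ * B).trace).re ≤
      Real.sqrt ((Aᴴ * A).trace).re * Real.sqrt ((Bᴴ * B).trace).re := by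
  have h1 : ((Aᴴ * B).trace).re ≤
      ∑ p : Fin d × Fin d, ‖A p.1 p.2‖ * ‖B p.1 p.2‖ := by
    rw [trace_conj_mul, Complex.re_sum]
    refine Finset.sum_le_sum fun p _ => ?_
    calc ((starRingEnd ℂ) (A p.1 p.2) * B p.1 p.2).re
        ≤ ‖(starRingEnd ℂ) (A p.1 p.2) * B p.1 p.2‖ := Complex.re_le_norm _
      _ = ‖A p.1 p.2‖ * ‖B p.1 p.2‖ := by
          rw [norm_mul, Complex.norm_conj]
  refine h1.trans ?_
  have h2 := Finset.sum_sq_le_sum_mul_sum_of_sq_eq_mul Finset.univ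
    (r := fun p : Fin d × Fin d => ‖A p.1 p.2‖ * ‖B p.1 p.2‖)
    (f := fun p : Fin d × Fin d => ‖A p.1 p.2‖ ^ 2)
    (g := fun p : Fin d × Fin d => ‖B p.1 p.2‖ ^ 2)
    (fun i _ => sq_nonneg _) (fun i _ => sq_nonneg _) (fun i _ => mul_pow _ _ _)
  rw [trace_conj_mul_self_re, trace_conj_mul_self_re,
    ← Real.sqrt_mul (Finset.sum_nonneg fun p _ => sq_nonneg _)]
  exact (Real.le_sqrt
    (Finset.sum_nonneg fun p _ => mul_nonneg (norm_nonneg _) (norm_nonneg _))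
    (mul_nonneg (Finset.sum_nonneg fun _ _ => sq_nonneg _)
      (Finset.sum_nonneg fun _ _ => sq_nonneg _))).mpr h2

section conj

variable (U : Matrix (Fin d) (Fin d) ℂ)

lemma conj_mul_conj (hU : star U * U = 1) (f g : Fin d → ℂ) :
    (U * diagonal f * star U) * (U * diagonal g * star U)
      = U * diagonal (fun i => f i * g i) * star U := by
  have h : U * diagonal f * star U * (U * diagonal g * star U)
      = U * (diagonal f * (star U * U) * diagonal g) * star U := by noncomm_ring
  rw [h, hU, mul_one, diagonal_mul_diagonal]

lemma conj_trace (hU : star U * U = 1) (f : Fin d → ℂ) :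
    (U * diagonal f * star U).trace = ∑ i, f i := by
  rw [Matrix.trace_mul_cycle, hU, one_mul, Matrix.trace_diagonal]

lemma conj_psd (g : Fin d → ℝ) (hg : ∀ i, 0 ≤ g i) :
    (U * diagonal (fun i => (g i : ℂ)) * star U).PosSemidef := by
  have hd : (diagonal (fun i => (g i : ℂ))).PosSemidef :=
    Matrix.posSemidef_diagonal_iff.mpr fun i => Complex.zero_le_real.mpr (hg i)
  have h := hd.mul_mul_conjTranspose_same U
  rwa [← Matrix.star_eq_conjTranspose] at h

lemma conj_herm (g : Fin d → ℝ) :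
    (U * diagonal (fun i => (g i : ℂ)) * star U).IsHermitian := by
  have hd : (diagonal (fun i => (g i : ℂ)))ᴴ = diagonal (fun i => (g i : ℂ)) := by
    rw [Matrix.diagonal_conjTranspose]
    have hs : (star fun i => ((g i : ℝ) : ℂ)) = fun i => ((g i : ℝ) : ℂ) := by
      funext i
      exact Complex.conj_ofReal _
    rw [hs]
  show _ᴴ = _
  simp only [Matrix.conjTranspose_mul, hd, Matrix.star_eq_conjTranspose,
    Matrix.conjTranspose_conjTranspose, Matrix.mul_assoc]

lemma conj_dot (hU : star U * U = 1) (v w : Fin d → ℂ) :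
    star (U *ᵥ v) ⬝ᵥ (U *ᵥ w) = star v ⬝ᵥ w := by
  rw [Matrix.star_mulVec, Matrix.dotProduct_mulVec, Matrix.vecMul_vecMul,
    ← Matrix.star_eq_conjTranspose, hU, Matrix.vecMul_one]

lemma nonneg_of_conj_psd (hU : star U * U = 1) (g : Fin d → ℝ)
    (h : (U * diagonal (fun i => (g i : ℂ)) * star U).PosSemidef) (i : Fin d) : 0 ≤ g i := by
  have h2 := h.re_dotProduct_nonneg (U *ᵥ Pi.single i 1)
  have hx : (U * diagonal (fun i => (g i : ℂ)) * star U) *ᵥ (U *ᵥ Pi.single i 1)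
      = U *ᵥ (diagonal (fun i => (g i : ℂ)) *ᵥ Pi.single i 1) := by
    rw [Matrix.mulVec_mulVec, Matrix.mulVec_mulVec]
    congr 1
    rw [Matrix.mul_assoc, Matrix.mul_assoc, hU, mul_one]
  rw [hx, conj_dot U hU] at h2
  have hval : star (Pi.single i (1:ℂ)) ⬝ᵥ (diagonal (fun i => (g i : ℂ)) *ᵥ Pi.single i 1)
      = (g i : ℂ) := by
    simp [dotProduct, Matrix.mulVec, Pi.single_apply, apply_ite, Finset.sum_ite_eq',
      Matrix.diagonal_apply]
  rw [hval] at h2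
  simpa using h2

end conj

lemma sqrt_sub_psd {Λ : Matrix (Fin d) (Fin d) ℂ} (hΛ : Λ.PosSemidef)
    (hΛI : (1 - Λ).PosSemidef) : (hΛ.sqrt - Λ).PosSemidef := by
  set U := (hΛ.1.eigenvectorUnitary : Matrix (Fin d) (Fin d) ℂ) with hUdef
  have hU : star U * U = 1 := Unitary.coe_star_mul_self _
  have hU' : U * star U = 1 := Unitary.coe_mul_star_self _
  set lam := hΛ.1.eigenvalues with hldef
  have hspec : Λ = U * diagonal (fun i => (lam i : ℂ)) * star U := by
    simpa [Function.comp_def] using hΛ.1.spectral_theorem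
  have hsqrt : hΛ.sqrt = U * diagonal (fun i => (Real.sqrt (lam i) : ℂ)) * star U := rfl
  have hone : (1 : Matrix (Fin d) (Fin d) ℂ)
      = U * diagonal (fun _ : Fin d => ((1:ℝ) : ℂ)) * star U := by
    have h1 : diagonal (fun _ : Fin d => ((1:ℝ) : ℂ)) = (1 : Matrix (Fin d) (Fin d) ℂ) := by
      simp
    rw [h1, mul_one, hU']
  have hl0 : ∀ i, 0 ≤ lam i := fun i => hΛ.eigenvalues_nonneg i
  have hl1 : ∀ i, lam i ≤ 1 := by
    intro i
    have hsub : (1 : Matrix (Fin d) (Fin d) ℂ) - Λ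
        = U * diagonal (fun i => ((1 - lam i : ℝ) : ℂ)) * star U := by
      conv_lhs => rw [hone, hspec]
      rw [← Matrix.sub_mul, ← Matrix.mul_sub, Matrix.diagonal_sub]
      congr 2
      funext j
      simp
    have := nonneg_of_conj_psd U hU _ (hsub ▸ hΛI) i
    linarith
  have hsub2 : hΛ.sqrt - Λ
      = U * diagonal (fun i => ((Real.sqrt (lam i) - lam i : ℝ) : ℂ)) * star U := by
    conv_lhs => rw [hsqrt, hspec]
    rw [← Matrix.sub_mul, ← Matrix.mul_sub, Matrix.diagonal_sub]
    congr 2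
    funext j
    simp
  rw [hsub2]
  refine conj_psd U _ fun i => ?_
  have h1 : lam i ≤ Real.sqrt (lam i) := by
    nlinarith [Real.sq_sqrt (hl0 i), Real.sqrt_nonneg (lam i), Real.sqrt_le_one.mpr (hl1 i)]
  linarith

/-- Duality for the trace norm of a Hermitian matrix: there is a Hermitian unitary `S`
with `Tr (S M) = ‖M‖₁`. -/
lemma exists_dual (Mm : Matrix (Fin d) (Fin d) ℂ) (hM : Mm.IsHermitian) :
    ∃ S : Matrix (Fin d) (Fin d) ℂ, S.IsHermitian ∧ S * S = 1 ∧
      traceNorm Mm = ((S * Mm).trace).re := by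
  set U := (hM.eigenvectorUnitary : Matrix (Fin d) (Fin d) ℂ) with hUdef
  have hU : star U * U = 1 := Unitary.coe_star_mul_self _
  have hU' : U * star U = 1 := Unitary.coe_mul_star_self _
  set lam := hM.eigenvalues with hldef
  have hspec : Mm = U * diagonal (fun i => (lam i : ℂ)) * star U := by
    simpa [Function.comp_def] using hM.spectral_theorem
  set s : Fin d → ℝ := fun i => if 0 ≤ lam i then 1 else -1 with hsdef
  refine ⟨U * diagonal (fun i => (s i : ℂ)) * star U, conj_herm U s, ?_, ?_⟩
  · rw [conj_mul_conj U hU]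
    have h : (fun i => (s i : ℂ) * (s i : ℂ)) = fun _ => (1:ℂ) := by
      funext i
      by_cases h : 0 ≤ lam i <;> simp [hsdef, h]
    rw [h]
    have : (diagonal (fun _ => (1:ℂ)) : Matrix (Fin d) (Fin d) ℂ) = 1 := Matrix.diagonal_one
    rw [this, mul_one, hU']
  · have hB : (U * diagonal (fun i => ((|lam i| : ℝ) : ℂ)) * star U).PosSemidef :=
      conj_psd U _ fun i => abs_nonneg _
    have hsq : (U * diagonal (fun i => ((|lam i| : ℝ) : ℂ)) * star U) ^ 2 = Mmᴴ * Mm := by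
      rw [hM.eq, pow_two, conj_mul_conj U hU]
      conv_rhs => rw [hspec]
      rw [conj_mul_conj U hU]
      have hfun : (fun i => ((|lam i| : ℝ) : ℂ) * ((|lam i| : ℝ) : ℂ))
          = fun i => ((lam i : ℝ) : ℂ) * ((lam i : ℝ) : ℂ) := by
        funext i
        rw [← Complex.ofReal_mul, ← Complex.ofReal_mul, abs_mul_abs_self]
      rw [hfun]
    have hEq := hB.eq_sqrt_of_sq_eq (Matrix.posSemidef_conjTranspose_mul_self Mm) hsq
    have htn : traceNorm Mm = ∑ i, |lam i| := by
      rw [traceNorm, ← hEq, conj_trace U hU, Complex.re_sum]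
      simp
    rw [htn]
    conv_rhs => rw [hspec]
    rw [conj_mul_conj U hU, conj_trace U hU, Complex.re_sum]
    refine Finset.sum_congr rfl fun i _ => ?_
    rw [← Complex.ofReal_mul, Complex.ofReal_re]
    by_cases h : 0 ≤ lam i
    · simp [hsdef, h, abs_of_nonneg h]
    · push_neg at h
      simp [hsdef, not_le.mpr h, abs_of_neg h]

end GentleAux

open GentleAux in
/-- Gentle measurement lemma for a single state. -/
lemma gentle_single {d : ℕ} {ρ Λ : Matrix (Fin d) (Fin d) ℂ} (hρ : ρ.PosSemidef)
    (hρtr : ρ.trace = 1) (hΛ : Λ.PosSemidef) (hΛI : (1 - Λ).PosSemidef) :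
    ((Λ * ρ).trace).re ≤ 1 ∧
    traceNorm (hΛ.sqrt * ρ * hΛ.sqrt - ρ) ≤ 2 * Real.sqrt (1 - ((Λ * ρ).trace).re) := by
  set T := hΛ.sqrt with hTdef
  set R := hρ.sqrt with hRdef
  have hT : T * T = Λ := hΛ.sqrt_mul_self
  have hR : R * R = ρ := hρ.sqrt_mul_self
  have hTh : T.IsHermitian := hΛ.posSemidef_sqrt.1
  have hRh : R.IsHermitian := hρ.posSemidef_sqrt.1
  have hρ1 : ρ.trace.re = 1 := by rw [hρtr]; simp
  -- trace of Λρ as a conjugated trace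
  have hcyc : (R * Λ * R).trace = (Λ * ρ).trace := by
    rw [Matrix.trace_mul_cycle, hR, Matrix.trace_mul_comm]
  -- R (1-Λ) R
  have h1Λ : (R * (1 - Λ) * R).trace.re = 1 - ((Λ * ρ).trace).re := by
    have h : R * (1 - Λ) * R = ρ - R * Λ * R := by rw [← hR]; noncomm_ring
    rw [h, Matrix.trace_sub, Complex.sub_re, hρ1, hcyc]
  have hpsd1Λ : (R * (1 - Λ) * R).PosSemidef := by
    have := hΛI.conjTranspose_mul_mul_same R
    rwa [hRh.eq] at this
  have hle1 : ((Λ * ρ).trace).re ≤ 1 := by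
    have := trace_re_nonneg hpsd1Λ
    rw [h1Λ] at this; linarith
  refine ⟨hle1, ?_⟩
  set ε₁ := 1 - ((Λ * ρ).trace).re with hε₁def
  -- the matrix and its dual
  have hTρT : (T * ρ * T).PosSemidef := by
    have := hρ.mul_mul_conjTranspose_same T
    rwa [hTh.eq] at this
  have hM : (T * ρ * T - ρ).IsHermitian := hTρT.1.sub hρ.1
  obtain ⟨S, hSh, hSS, hdual⟩ := exists_dual _ hM
  rw [hdual]
  -- split
  have hsplit : S * (T * ρ * T - ρ) = S * T * ρ * (T - 1) + S * (T - 1) * ρ := by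
    noncomm_ring
  rw [hsplit, Matrix.trace_add, Complex.add_re]
  -- the common factor X = (T-1) R
  have hXherm : ((T - 1) * R)ᴴ = R * (T - 1) := by
    rw [Matrix.conjTranspose_mul, Matrix.conjTranspose_sub, hTh.eq, hRh.eq,
      Matrix.conjTranspose_one]
  -- bound on n2 of X
  have hXbound : ((((T - 1) * R)ᴴ * ((T - 1) * R)).trace).re ≤ ε₁ := by
    have hkey : R * (1 - Λ) * R - ((T - 1) * R)ᴴ * ((T - 1) * R)
        = R * ((T - Λ) + (T - Λ)) * R := by
      rw [hXherm, ← hT]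
      noncomm_ring
    have hpsd : (R * ((T - Λ) + (T - Λ)) * R).PosSemidef := by
      have h2 := ((sqrt_sub_psd hΛ hΛI).add (sqrt_sub_psd hΛ hΛI)).conjTranspose_mul_mul_same R
      rwa [hRh.eq] at h2
    have h3 := trace_re_nonneg hpsd
    rw [← hkey, Matrix.trace_sub, Complex.sub_re] at h3
    rw [← h1Λ]
    linarith
  have hε₁0 : 0 ≤ ε₁ := by rw [hε₁def]; linarith
  have hsqX : Real.sqrt ((((T - 1) * R)ᴴ * ((T - 1) * R)).trace).re ≤ Real.sqrt ε₁ :=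
    Real.sqrt_le_sqrt hXbound
  -- Term A
  have hYA : ((S * (T * R))ᴴ * (S * (T * R))).trace.re ≤ 1 := by
    have h : (S * (T * R))ᴴ * (S * (T * R)) = R * Λ * R := by
      rw [Matrix.conjTranspose_mul, Matrix.conjTranspose_mul, hSh.eq, hTh.eq, hRh.eq]
      calc R * T * S * (S * (T * R)) = R * T * (S * S) * (T * R) := by noncomm_ring
        _ = R * (T * T) * R := by rw [hSS]; noncomm_ring
        _ = R * Λ * R := by rw [hT]
    rw [h, hcyc]
    exact hle1
  have htermA : ((S * T * ρ * (T - 1)).trace).re ≤ Real.sqrt ε₁ := by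
    have heq : (S * T * ρ * (T - 1)).trace = (((T - 1) * R)ᴴ * (S * (T * R))).trace := by
      rw [hXherm, ← hR]
      rw [show S * T * (R * R) * (T - 1) = (S * (T * R)) * (R * (T - 1)) from by noncomm_ring,
        show R * (T - 1) * (S * (T * R)) = (R * (T - 1)) * (S * (T * R)) from by noncomm_ring,
        Matrix.trace_mul_comm]
    rw [heq]
    calc (((T - 1) * R)ᴴ * (S * (T * R))).trace.re
        ≤ Real.sqrt ((((T - 1) * R)ᴴ * ((T - 1) * R)).trace).re *
          Real.sqrt (((S * (T * R))ᴴ * (S * (T * R))).trace).re := trace_CS _ _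
      _ ≤ Real.sqrt ε₁ * 1 := by
          refine mul_le_mul hsqX ?_ (Real.sqrt_nonneg _) (Real.sqrt_nonneg _)
          calc Real.sqrt (((S * (T * R))ᴴ * (S * (T * R))).trace).re
              ≤ Real.sqrt 1 := Real.sqrt_le_sqrt hYA
            _ = 1 := Real.sqrt_one
      _ = Real.sqrt ε₁ := mul_one _
  -- Term B
  have hYB : ((S * R)ᴴ * (S * R)).trace.re ≤ 1 := by
    have h : (S * R)ᴴ * (S * R) = ρ := by
      rw [Matrix.conjTranspose_mul, hSh.eq, hRh.eq]
      calc R * S * (S * R) = R * (S * S) * R := by noncomm_ring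
        _ = ρ := by rw [hSS, mul_one, hR]
    rw [h, hρ1]
  have htermB : ((S * (T - 1) * ρ).trace).re ≤ Real.sqrt ε₁ := by
    have heq : (S * (T - 1) * ρ).trace = ((S * R)ᴴ * ((T - 1) * R)).trace := by
      rw [Matrix.conjTranspose_mul, hSh.eq, hRh.eq, ← hR]
      rw [show S * (T - 1) * (R * R) = (S * (T - 1) * R) * R from by noncomm_ring,
        show R * S * ((T - 1) * R) = R * (S * (T - 1) * R) from by noncomm_ring,
        Matrix.trace_mul_comm]
    rw [heq]
    calc ((S * R)ᴴ * ((T - 1) * R)).trace.re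
        ≤ Real.sqrt (((S * R)ᴴ * (S * R)).trace).re *
          Real.sqrt ((((T - 1) * R)ᴴ * ((T - 1) * R)).trace).re := trace_CS _ _
      _ ≤ 1 * Real.sqrt ε₁ := by
          refine mul_le_mul ?_ hsqX (Real.sqrt_nonneg _) zero_le_one
          calc Real.sqrt (((S * R)ᴴ * (S * R)).trace).re
              ≤ Real.sqrt 1 := Real.sqrt_le_sqrt hYB
            _ = 1 := Real.sqrt_one
      _ = Real.sqrt ε₁ := one_mul _
  linarith

/-- Gentle Measurement Lemma for ensembles: if `0 ≤ Λ ≤ I` succeeds with probability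
at least `1 − ε` on the average state `ρ = Σ_x p(x) ρ_x` of a finite ensemble of density
operators, then `Σ_x p(x) ‖√Λ ρ_x √Λ − ρ_x‖₁ ≤ 2√ε`. -/
theorem gentle_measurement_ensemble {d : ℕ} {X : Type} [Fintype X]
    (p : X → ℝ) (hp : ∀ x, 0 ≤ p x) (hp1 : ∑ x, p x = 1)
    (ρ : X → Matrix (Fin d) (Fin d) ℂ)
    (hρ : ∀ x, (ρ x).PosSemidef) (hρtr : ∀ x, (ρ x).trace = 1)
    (Λ : Matrix (Fin d) (Fin d) ℂ) (hΛ : Λ.PosSemidef) (hΛI : Loewner Λ 1)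
    (ε : ℝ) (hε : 0 ≤ ε) (hε1 : ε ≤ 1)
    (hsucc : 1 - ε ≤ ((Λ * ∑ x, (p x) • ρ x).trace).re) :
    ∑ x, p x * traceNorm (hΛ.sqrt * ρ x * hΛ.sqrt - ρ x) ≤ 2 * Real.sqrt ε := by
  have hΛI' : ((1 : Matrix (Fin d) (Fin d) ℂ) - Λ).PosSemidef := hΛI
  set εx : X → ℝ := fun x => 1 - ((Λ * ρ x).trace).re with hεxdef
  have hsingle := fun x => gentle_single (hρ x) (hρtr x) hΛ hΛI'
  have hεx0 : ∀ x, 0 ≤ εx x := fun x => by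
    have := (hsingle x).1; rw [hεxdef]; dsimp only; linarith
  have hsum : ∑ x, p x * εx x ≤ ε := by
    have hexp : (Λ * ∑ x, p x • ρ x) = ∑ x, p x • (Λ * ρ x) := by
      rw [Finset.mul_sum]
      exact Finset.sum_congr rfl fun x _ => (Matrix.mul_smul _ _ _)
    have htr : ((Λ * ∑ x, p x • ρ x).trace).re = ∑ x, p x * ((Λ * ρ x).trace).re := by
      rw [hexp, Matrix.trace_sum, Complex.re_sum]
      exact Finset.sum_congr rfl fun x _ => by
        rw [Matrix.trace_smul, Complex.smul_re]; rfl
    have : ∑ x, p x * εx x = 1 - ((Λ * ∑ x, p x • ρ x).trace).re := by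
      rw [htr, hεxdef]
      simp only [mul_sub, mul_one, Finset.sum_sub_distrib, hp1]
    rw [this]
    linarith
  calc ∑ x, p x * traceNorm (hΛ.sqrt * ρ x * hΛ.sqrt - ρ x)
      ≤ ∑ x, p x * (2 * Real.sqrt (εx x)) := by
        refine Finset.sum_le_sum fun x _ => mul_le_mul_of_nonneg_left ?_ (hp x)
        exact (hsingle x).2
    _ = 2 * ∑ x, p x * Real.sqrt (εx x) := by
        rw [Finset.mul_sum]
        exact Finset.sum_congr rfl fun x _ => by ring
    _ ≤ 2 * Real.sqrt (∑ x, p x * εx x) := by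
        have hCS := Finset.sum_sq_le_sum_mul_sum_of_sq_eq_mul Finset.univ
          (r := fun x => p x * Real.sqrt (εx x)) (f := p) (g := fun x => p x * εx x)
          (fun x _ => hp x) (fun x _ => mul_nonneg (hp x) (hεx0 x))
          (fun x _ => by
            rw [mul_pow, Real.sq_sqrt (hεx0 x)]; ring)
        rw [hp1, one_mul] at hCS
        have hr0 : 0 ≤ ∑ x, p x * Real.sqrt (εx x) :=
          Finset.sum_nonneg fun x _ => mul_nonneg (hp x) (Real.sqrt_nonneg _)
        have hg0 : 0 ≤ ∑ x, p x * εx x :=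
          Finset.sum_nonneg fun x _ => mul_nonneg (hp x) (hεx0 x)
        have := (Real.le_sqrt hr0 hg0).mpr hCS
        linarith
    _ ≤ 2 * Real.sqrt ε := by
        have := Real.sqrt_le_sqrt hsum
        linarith
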